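/- Let G be a finite tree. Then the Szeged index of G equals the Wiener index of G: ∑_{{u,v} ∈ E(G)} n(u,v)·n(v,u) = ∑_{{u,v} ⊆ V(G)} d(u,v). -/
import Mathlib


/-- `nCloser G s t` is the number of vertices strictly closer to `s` than to `t`. -/
noncomputable def nCloser {V : Type*} (G : SimpleGraph V) (s t : V) : ℕ :=
  Nat.card {v : V | G.dist v s < G.dist v t}


open SimpleGraph Finset

section Aux

set_option linter.unusedSectionVars false

variable {V : Type*} [DecidableEq V] {G : SimpleGraph V}

lemma tree_path_length_eq_dist (hconn : G.Connected) (hacyc : G.IsAcyclic)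
    {x y : V} {p : G.Walk x y} (hp : p.IsPath) : p.length = G.dist x y := by
  obtain ⟨w, hw⟩ := hconn.exists_walk_length_eq_dist x y
  have hwp : w.IsPath := w.isPath_of_length_eq_dist hw
  have h := (SimpleGraph.isAcyclic_iff_path_unique.mp hacyc)
    (⟨p, hp⟩ : G.Path x y) (⟨w, hwp⟩ : G.Path x y)
  have h' : p = w := congrArg Subtype.val h
  rw [h', hw]

lemma tree_dist_adj (hconn : G.Connected) (hacyc : G.IsAcyclic)
    {u v : V} (h : G.Adj u v) (x : V) :
    G.dist x v = G.dist x u + 1 ∨ G.dist x u = G.dist x v + 1 := by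
  obtain ⟨q, hq⟩ := hconn.exists_walk_length_eq_dist x v
  have hqp : q.IsPath := q.isPath_of_length_eq_dist hq
  by_cases hu : u ∈ q.support
  · left
    have h1 : (q.takeUntil u hu).length = G.dist x u :=
      tree_path_length_eq_dist hconn hacyc (hqp.takeUntil hu)
    have h2 : (q.dropUntil u hu).length = G.dist u v :=
      tree_path_length_eq_dist hconn hacyc (hqp.dropUntil hu)
    have h4 : (q.takeUntil u hu).length + (q.dropUntil u hu).length = q.length := by
      rw [← SimpleGraph.Walk.length_append, q.take_spec hu]
    have hd1 : G.dist u v = 1 := SimpleGraph.dist_eq_one_iff_adj.mpr h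
    omega
  · right
    have hpath : (q.concat h.symm).IsPath := by
      rw [← SimpleGraph.Walk.isPath_reverse_iff, SimpleGraph.Walk.reverse_concat,
        SimpleGraph.Walk.cons_isPath_iff]
      refine ⟨hqp.reverse, ?_⟩
      rw [SimpleGraph.Walk.support_reverse, List.mem_reverse]
      exact hu
    have hlen := tree_path_length_eq_dist hconn hacyc hpath
    rw [SimpleGraph.Walk.length_concat, hq] at hlen
    omega

/-- Key rigidity lemma: if `ab` and `uv` are edges with `a` strictly closer to `u`
and `b` strictly closer to `v`, then `a = u` and `b = v`. -/
lemma tree_flip_eq (hconn : G.Connected) (hacyc : G.IsAcyclic)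
    {a b u v : V} (hab : G.Adj a b) (huv : G.Adj u v)
    (ha : G.dist a v = G.dist a u + 1) (hb : G.dist b u = G.dist b v + 1) :
    a = u ∧ b = v := by
  have h1 : G.dist b u ≤ G.dist b a + G.dist a u := hconn.dist_triangle
  have hba : G.dist b a = 1 := SimpleGraph.dist_eq_one_iff_adj.mpr hab.symm
  have h2 : G.dist a v ≤ G.dist a b + G.dist b v := hconn.dist_triangle
  have hab1 : G.dist a b = 1 := SimpleGraph.dist_eq_one_iff_adj.mpr hab
  have hbv : G.dist b v = G.dist a u := by omega
  have hbu : G.dist b u = G.dist a u + 1 := by omega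
  rcases Nat.eq_zero_or_pos (G.dist a u) with h0 | hpos
  · exact ⟨hconn.dist_eq_zero_iff.mp h0, hconn.dist_eq_zero_iff.mp (by omega)⟩
  · exfalso
    obtain ⟨R, hR⟩ := hconn.exists_walk_length_eq_dist b v
    have hW : (SimpleGraph.Walk.cons hab R).length = G.dist a v := by
      rw [SimpleGraph.Walk.length_cons, hR]; omega
    have hWp := (SimpleGraph.Walk.cons hab R).isPath_of_length_eq_dist hW
    obtain ⟨P, hP⟩ := hconn.exists_walk_length_eq_dist a u
    have hW2 : (P.concat huv).length = G.dist a v := by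
      rw [SimpleGraph.Walk.length_concat, hP]; omega
    have hW2p := (P.concat huv).isPath_of_length_eq_dist hW2
    have hequ := (SimpleGraph.isAcyclic_iff_path_unique.mp hacyc)
      (⟨SimpleGraph.Walk.cons hab R, hWp⟩ : G.Path a v) ⟨P.concat huv, hW2p⟩
    have heq : SimpleGraph.Walk.cons hab R = P.concat huv := congrArg Subtype.val hequ
    have hbmem : b ∈ (P.concat huv).support := by
      rw [← heq, SimpleGraph.Walk.support_cons]
      exact List.mem_cons_of_mem _ R.start_mem_support
    rw [SimpleGraph.Walk.support_concat] at hbmem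
    simp only [List.concat_eq_append, List.mem_append, List.mem_singleton] at hbmem
    rcases hbmem with hbP | hbv'
    · have : G.dist b u ≤ (P.dropUntil b hbP).length := G.dist_le _
      have h5 := SimpleGraph.Walk.length_dropUntil_le P hbP
      omega
    · have : G.dist b v = 0 := by rw [hbv']; exact SimpleGraph.dist_self
      omega

/-- If a dart lies on a path from `x`, the distance to its head is one more than
the distance to its tail. -/
lemma tree_dist_of_dart_mem (hconn : G.Connected) (hacyc : G.IsAcyclic)
    {x y : V} (p : G.Walk x y) (hp : p.IsPath) :
    ∀ d : G.Dart, d ∈ p.darts → G.dist x d.snd = G.dist x d.fst + 1 := by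
  induction p with
  | nil => simp [SimpleGraph.Walk.darts_nil]
  | @cons a b c h q ih =>
    intro d hd
    rw [SimpleGraph.Walk.darts_cons, List.mem_cons] at hd
    rw [SimpleGraph.Walk.cons_isPath_iff] at hp
    have key : ∀ w (hw : w ∈ q.support), G.dist a w = G.dist b w + 1 := by
      intro w hw
      have ht : (q.takeUntil w hw).length = G.dist b w :=
        tree_path_length_eq_dist hconn hacyc (hp.1.takeUntil hw)
      have hcons : (SimpleGraph.Walk.cons h (q.takeUntil w hw)).IsPath := by
        rw [SimpleGraph.Walk.cons_isPath_iff]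
        exact ⟨hp.1.takeUntil hw, fun hwmem => hp.2 (q.support_takeUntil_subset hw hwmem)⟩
      have := tree_path_length_eq_dist hconn hacyc hcons
      rw [SimpleGraph.Walk.length_cons, ht] at this
      omega
    rcases hd with hd | hd
    · subst hd
      have h0 : G.dist a a = 0 := SimpleGraph.dist_self
      have h1 : G.dist a b = 1 := SimpleGraph.dist_eq_one_iff_adj.mpr h
      simp [h0, h1]
    · have ih' := ih hp.1 d hd
      have hu : d.fst ∈ q.support := q.dart_fst_mem_support_of_mem_darts hd
      have hv : d.snd ∈ q.support := q.dart_snd_mem_support_of_mem_darts hd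
      rw [key _ hu, key _ hv] at *
      omega

end Aux

section Aux2

set_option linter.unusedSectionVars false

variable {V : Type*} [DecidableEq V] {G : SimpleGraph V}

/-- Converse: if `x` is strictly closer to `u` and `y` strictly closer to `v`,
then the dart `(u, v)` lies on any walk from `x` to `y`. -/
lemma tree_dart_mem_of_dist (hconn : G.Connected) (hacyc : G.IsAcyclic)
    {u v : V} (huv : G.Adj u v) :
    ∀ {x y : V} (p : G.Walk x y), G.dist x v = G.dist x u + 1 →
      G.dist y u = G.dist y v + 1 → (⟨(u, v), huv⟩ : G.Dart) ∈ p.darts := by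
  intro x y p
  induction p with
  | nil =>
    intro h1 h2
    omega
  | @cons a b c h q ih =>
    intro h1 h2
    rw [SimpleGraph.Walk.darts_cons, List.mem_cons]
    rcases tree_dist_adj hconn hacyc huv b with hb | hb
    · exact Or.inr (ih hb h2)
    · obtain ⟨hau, hbv⟩ := tree_flip_eq hconn hacyc h huv h1 hb
      left
      apply SimpleGraph.Dart.ext
      simp [hau, hbv]

/-- The number of oriented edges `(u,v)` with `x` strictly closer to `u` and `y`
strictly closer to `v` equals the distance from `x` to `y`. -/
lemma tree_card_darts (hconn : G.Connected) (hacyc : G.IsAcyclic) [Fintype V]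
    (x y : V) [DecidablePred fun uv : V × V =>
      G.Adj uv.1 uv.2 ∧ G.dist x uv.1 < G.dist x uv.2 ∧ G.dist y uv.2 < G.dist y uv.1] :
    ((Finset.univ ×ˢ Finset.univ).filter fun uv : V × V =>
        G.Adj uv.1 uv.2 ∧ G.dist x uv.1 < G.dist x uv.2 ∧ G.dist y uv.2 < G.dist y uv.1).card
      = G.dist x y := by
  obtain ⟨p, hp⟩ := hconn.exists_walk_length_eq_dist x y
  have hpp : p.IsPath := p.isPath_of_length_eq_dist hp
  have hnodup : (p.darts.map SimpleGraph.Dart.toProd).Nodup := by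
    have hedges : p.edges.Nodup := hpp.isTrail.edges_nodup
    have hdarts : p.darts.Nodup := by
      have : (p.darts.map SimpleGraph.Dart.edge).Nodup := hedges
      exact this.of_map _
    exact hdarts.map SimpleGraph.Dart.toProd_injective
  have hset : ((Finset.univ ×ˢ Finset.univ).filter fun uv : V × V =>
        G.Adj uv.1 uv.2 ∧ G.dist x uv.1 < G.dist x uv.2 ∧ G.dist y uv.2 < G.dist y uv.1)
      = (p.darts.map SimpleGraph.Dart.toProd).toFinset := by
    ext ⟨u, v⟩
    simp only [Finset.mem_filter, Finset.mem_product, Finset.mem_univ, true_and,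
      List.mem_toFinset, List.mem_map]
    constructor
    · rintro ⟨huv, h1, h2⟩
      rcases tree_dist_adj hconn hacyc huv x with hx | hx
      swap; · omega
      have h2' : G.dist y u = G.dist y v + 1 := by
        rcases tree_dist_adj hconn hacyc huv y with hy | hy <;> omega
      exact ⟨⟨(u, v), huv⟩, tree_dart_mem_of_dist hconn hacyc huv p hx h2', rfl⟩
    · rintro ⟨d, hd, hdp⟩
      have h1 : G.dist x d.snd = G.dist x d.fst + 1 :=
        tree_dist_of_dart_mem hconn hacyc p hpp d hd
      have h2 : G.dist y d.fst = G.dist y d.snd + 1 := by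
        have hds : d.symm ∈ p.reverse.darts := by
          rw [SimpleGraph.Walk.mem_darts_reverse, SimpleGraph.Dart.symm_symm]
          exact hd
        have := tree_dist_of_dart_mem hconn hacyc p.reverse hpp.reverse d.symm hds
        simpa using this
      have hadj : G.Adj u v := by
        have := d.adj
        rw [hdp] at this
        exact this
      have hfst : d.fst = u := by rw [hdp]
      have hsnd : d.snd = v := by rw [hdp]
      rw [hfst, hsnd] at h1 h2
      exact ⟨hadj, by omega, by omega⟩
  rw [hset, List.toFinset_card_of_nodup hnodup, List.length_map,
    SimpleGraph.Walk.length_darts, hp]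

end Aux2



/-- The Szeged index equals the Wiener index on trees; both sides are stated as sums over
ordered pairs of vertices, which counts each unordered pair (and each edge) exactly twice. -/
theorem szeged_eq_wiener_of_tree {V : Type*} [Fintype V] (G : SimpleGraph V)
    [DecidableRel G.Adj] (hconn : G.Connected) (hacyc : G.IsAcyclic) :
    (∑ u : V, ∑ v : V, if G.Adj u v then nCloser G u v * nCloser G v u else 0)
      = ∑ u : V, ∑ v : V, G.dist u v := by
  classical
  have hnc : ∀ s t : V, nCloser G s t
      = (Finset.univ.filter fun x => G.dist x s < G.dist x t).card := by
    intro s t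
    rw [nCloser, Nat.card_coe_set_eq, Set.ncard_eq_toFinset_card']
    congr 1
    ext x
    simp
  calc (∑ u : V, ∑ v : V, if G.Adj u v then nCloser G u v * nCloser G v u else 0)
      = ∑ u : V, ∑ v : V, ∑ x : V, ∑ y : V,
          (if G.Adj u v ∧ G.dist x u < G.dist x v ∧ G.dist y v < G.dist y u
            then 1 else 0) := by
        refine Finset.sum_congr rfl fun u _ => Finset.sum_congr rfl fun v _ => ?_
        by_cases h : G.Adj u v
        · rw [if_pos h, hnc, hnc, Finset.card_filter, Finset.card_filter,
            Finset.sum_mul_sum]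
          refine Finset.sum_congr rfl fun x _ => Finset.sum_congr rfl fun y _ => ?_
          by_cases h1 : G.dist x u < G.dist x v <;>
            by_cases h2 : G.dist y v < G.dist y u <;> simp [h, h1, h2]
        · simp [h]
    _ = ∑ x : V, ∑ y : V, ∑ u : V, ∑ v : V,
          (if G.Adj u v ∧ G.dist x u < G.dist x v ∧ G.dist y v < G.dist y u
            then 1 else 0) := by
        have swap4 : ∀ f : V → V → V → V → ℕ,
            (∑ u : V, ∑ v : V, ∑ x : V, ∑ y : V, f u v x y)
              = ∑ x : V, ∑ y : V, ∑ u : V, ∑ v : V, f u v x y := by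
          intro f
          calc ∑ u : V, ∑ v : V, ∑ x : V, ∑ y : V, f u v x y
              = ∑ u : V, ∑ x : V, ∑ v : V, ∑ y : V, f u v x y :=
                Finset.sum_congr rfl fun u _ => Finset.sum_comm
            _ = ∑ x : V, ∑ u : V, ∑ v : V, ∑ y : V, f u v x y := Finset.sum_comm
            _ = ∑ x : V, ∑ u : V, ∑ y : V, ∑ v : V, f u v x y :=
                Finset.sum_congr rfl fun x _ =>
                  Finset.sum_congr rfl fun u _ => Finset.sum_comm
            _ = ∑ x : V, ∑ y : V, ∑ u : V, ∑ v : V, f u v x y :=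
                Finset.sum_congr rfl fun x _ => Finset.sum_comm
        exact swap4 _
    _ = ∑ u : V, ∑ v : V, G.dist u v := by
        refine Finset.sum_congr rfl fun x _ => Finset.sum_congr rfl fun y _ => ?_
        have := tree_card_darts (G := G) hconn hacyc x y
        rw [← this, Finset.card_filter, Finset.sum_product]
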